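/- Let T ∈ M_n(ℂ) with W(T) ⊂ S_α for some α ∈ [0, π/2). Then the 2n×2n block matrix [[sec(α) Re(T), T],[T*, sec(α) Re(T)]] is positive semidefinite. -/

import Mathlib

open Matrix Complex
open scoped ComplexOrder

/-- Hermitian real part `(X + Xᴴ)/2`. -/
noncomputable def reM {m : ℕ} (X : Matrix (Fin m) (Fin m) ℂ) : Matrix (Fin m) (Fin m) ℂ :=
  (1 / 2 : ℂ) • (X + Xᴴ)

/-- Hermitian imaginary part `(X - Xᴴ)/(2i)`. -/
noncomputable def imM {m : ℕ} (X : Matrix (Fin m) (Fin m) ℂ) : Matrix (Fin m) (Fin m) ℂ :=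
  (-Complex.I / 2) • (X - Xᴴ)

/-- Numerical range `W(X) = {⟨Xx, x⟩ : ‖x‖ = 1}`. -/
noncomputable def numRange {m : ℕ} (X : Matrix (Fin m) (Fin m) ℂ) : Set ℂ :=
  {z | ∃ x : EuclideanSpace ℂ (Fin m), ‖x‖ = 1 ∧ z = star (x : Fin m → ℂ) ⬝ᵥ X.mulVec x}

/-- Numerical radius `ω(X) = sup {|z| : z ∈ W(X)}`. -/
noncomputable def numRadius {m : ℕ} (X : Matrix (Fin m) (Fin m) ℂ) : ℝ :=
  sSup ((fun z : ℂ => ‖z‖) '' numRange X)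

/-- The sector `S_α`. -/
def sector (α : ℝ) : Set ℂ := {z : ℂ | 0 < z.re ∧ |z.im| ≤ Real.tan α * z.re}

/-- Operator norm of a matrix acting on Euclidean space. -/
noncomputable def opNorm {m : ℕ} (X : Matrix (Fin m) (Fin m) ℂ) : ℝ :=
  ‖Matrix.toEuclideanCLM (𝕜 := ℂ) X‖

namespace SectorAux

variable {n : ℕ}

lemma aux_conj (T : Matrix (Fin n) (Fin n) ℂ) (x : Fin n → ℂ) :
    star x ⬝ᵥ Tᴴ *ᵥ x = starRingEnd ℂ (star x ⬝ᵥ T *ᵥ x) := by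
  rw [Matrix.dotProduct_mulVec, ← Matrix.star_mulVec]
  rw [show starRingEnd ℂ (star x ⬝ᵥ T *ᵥ x) = star (star x ⬝ᵥ T *ᵥ x) from rfl]
  rw [Matrix.star_dotProduct]

lemma aux_reM (T : Matrix (Fin n) (Fin n) ℂ) (x : Fin n → ℂ) :
    star x ⬝ᵥ (reM T) *ᵥ x = (((star x ⬝ᵥ T *ᵥ x).re : ℝ) : ℂ) := by
  set z := star x ⬝ᵥ T *ᵥ x with hz
  rw [reM, Matrix.smul_mulVec, dotProduct_smul, Matrix.add_mulVec,
    dotProduct_add, ← hz, aux_conj]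
  rw [Complex.add_conj, smul_eq_mul]
  push_cast
  ring

lemma aux_imM (T : Matrix (Fin n) (Fin n) ℂ) (x : Fin n → ℂ) :
    star x ⬝ᵥ (imM T) *ᵥ x = (((star x ⬝ᵥ T *ᵥ x).im : ℝ) : ℂ) := by
  set z := star x ⬝ᵥ T *ᵥ x with hz
  rw [imM, Matrix.smul_mulVec, dotProduct_smul, Matrix.sub_mulVec,
    dotProduct_sub, ← hz, aux_conj]
  rw [Complex.sub_conj, smul_eq_mul]
  push_cast
  linear_combination (-((z.im : ℝ) : ℂ)) * Complex.I_mul_I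

lemma reM_herm (T : Matrix (Fin n) (Fin n) ℂ) : (reM T).IsHermitian := by
  unfold Matrix.IsHermitian reM
  rw [Matrix.conjTranspose_smul]
  simp [add_comm]

lemma imM_herm (T : Matrix (Fin n) (Fin n) ℂ) : (imM T).IsHermitian := by
  unfold Matrix.IsHermitian imM
  rw [Matrix.conjTranspose_smul]
  ext i j
  simp [Complex.ext_iff]
  constructor <;> ring

lemma reM_add_I_imM (T : Matrix (Fin n) (Fin n) ℂ) : reM T + Complex.I • imM T = T := by
  ext i j
  simp [reM, imM, Matrix.add_apply, Matrix.smul_apply, Matrix.sub_apply, smul_eq_mul,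
    Matrix.conjTranspose_apply]
  linear_combination (-(T i j - (starRingEnd ℂ) (T j i)) / 2) * Complex.I_mul_I

lemma reM_sub_I_imM (T : Matrix (Fin n) (Fin n) ℂ) : reM T - Complex.I • imM T = Tᴴ := by
  ext i j
  simp [reM, imM, Matrix.add_apply, Matrix.smul_apply, Matrix.sub_apply, smul_eq_mul,
    Matrix.conjTranspose_apply]
  linear_combination ((T i j - (starRingEnd ℂ) (T j i)) / 2) * Complex.I_mul_I

lemma blockPSD {P : Matrix (Fin n) (Fin n) ℂ} (hP : P.PosSemidef) (a : ℂ) (r : ℝ)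
    (hr : 0 ≤ r) (hra : a * starRingEnd ℂ a = (r : ℂ) * (r : ℂ)) :
    (Matrix.fromBlocks ((r : ℂ) • P) (a • P) ((starRingEnd ℂ a) • P) ((r : ℂ) • P)).PosSemidef := by
  obtain ⟨B, rfl⟩ : ∃ B : Matrix (Fin n) (Fin n) ℂ, P = Bᴴ * B := by
    open scoped MatrixOrder in exact CStarAlgebra.nonneg_iff_eq_star_mul_self.mp hP.nonneg
  refine Matrix.PosSemidef.of_dotProduct_mulVec_nonneg ?_ ?_
  · unfold Matrix.IsHermitian
    rw [Matrix.fromBlocks_conjTranspose]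
    simp [Matrix.conjTranspose_smul, Matrix.conjTranspose_mul, Complex.conj_ofReal]
  · suffices hsplit : ∀ (x y : Fin n → ℂ), 0 ≤ star (Sum.elim x y) ⬝ᵥ
        (Matrix.fromBlocks ((r : ℂ) • (Bᴴ * B)) (a • (Bᴴ * B)) ((starRingEnd ℂ a) • (Bᴴ * B))
          ((r : ℂ) • (Bᴴ * B))) *ᵥ (Sum.elim x y) by
      intro z
      have := hsplit (z ∘ Sum.inl) (z ∘ Sum.inr)
      rwa [Sum.elim_comp_inl_inr] at this
    intro x y
    rw [Function.star_sumElim, Matrix.fromBlocks_mulVec, sumElim_dotProduct_sumElim]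
    simp only [Sum.elim_comp_inl, Sum.elim_comp_inr]
    set u := B *ᵥ x with hu
    set v := B *ᵥ y with hv
    have key : ∀ (c : ℂ) (w w' : Fin n → ℂ),
        star w ⬝ᵥ (c • (Bᴴ * B)) *ᵥ w' = c * (star (B *ᵥ w) ⬝ᵥ (B *ᵥ w')) := by
      intro c w w'
      rw [Matrix.smul_mulVec, dotProduct_smul, smul_eq_mul, ← Matrix.mulVec_mulVec,
        Matrix.dotProduct_mulVec, ← Matrix.star_mulVec]
    rw [dotProduct_add, dotProduct_add, key, key, key, key]
    rcases eq_or_lt_of_le hr with hr0 | hr0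
    · have ha : a = 0 := by
        have : a * starRingEnd ℂ a = 0 := by rw [hra, ← hr0]; simp
        simpa using (mul_self_eq_zero (a := ‖a‖)).mp (by
          have h2 := congrArg norm this
          simpa [_root_.map_mul] using h2)
      simp [ha, ← hr0]
    · set w := (starRingEnd ℂ a) • u + (r : ℂ) • v with hw
      have hkey : (r : ℂ) * ((r : ℂ) * (star u ⬝ᵥ u) + a * (star u ⬝ᵥ v)
          + ((starRingEnd ℂ a) * (star v ⬝ᵥ u) + (r : ℂ) * (star v ⬝ᵥ v)))
          = star w ⬝ᵥ w := by
        rw [hw]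
        simp only [star_add, star_smul, add_dotProduct, dotProduct_add,
          smul_dotProduct, dotProduct_smul, smul_eq_mul, star_trivial,
          RCLike.star_def, Complex.conj_conj, Complex.conj_ofReal]
        ring_nf
        linear_combination (star u ⬝ᵥ u) * hra.symm
      have hnn : 0 ≤ star w ⬝ᵥ w := dotProduct_star_self_nonneg w
      have : 0 ≤ ((r : ℂ))⁻¹ * (star w ⬝ᵥ w) := by
        apply mul_nonneg _ hnn
        rw [show ((r : ℂ))⁻¹ = ((r⁻¹ : ℝ) : ℂ) from (Complex.ofReal_inv r).symm]
        exact_mod_cast inv_nonneg.mpr hr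
      calc (0 : ℂ) ≤ ((r : ℂ))⁻¹ * (star w ⬝ᵥ w) := this
        _ = _ := by
            rw [← hkey, ← mul_assoc, inv_mul_cancel₀ (by exact_mod_cast hr0.ne'), one_mul]

lemma sector_quad {T : Matrix (Fin n) (Fin n) ℂ} {α : ℝ} (h : numRange T ⊆ sector α)
    (x : Fin n → ℂ) :
    0 ≤ (star x ⬝ᵥ T *ᵥ x).re ∧ |(star x ⬝ᵥ T *ᵥ x).im| ≤ Real.tan α * (star x ⬝ᵥ T *ᵥ x).re := by
  by_cases hx : x = 0
  · simp [hx]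
  · set x' : EuclideanSpace ℂ (Fin n) := WithLp.toLp 2 x with hx'
    have hx'0 : x' ≠ 0 := fun h' => hx (by simpa [hx'] using congrArg WithLp.ofLp h')
    have hnorm : (0:ℝ) < ‖x'‖ := norm_pos_iff.mpr hx'0
    set u : EuclideanSpace ℂ (Fin n) := ‖x'‖⁻¹ • x' with hu
    have hu1 : ‖u‖ = 1 := by
      rw [hu, norm_smul]
      simp [abs_of_pos (inv_pos.mpr hnorm), inv_mul_cancel₀ hnorm.ne']
    have hmem : star (u : Fin n → ℂ) ⬝ᵥ T *ᵥ (u : Fin n → ℂ) ∈ sector α :=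
      h ⟨u, hu1, rfl⟩
    obtain ⟨R, hR, hRx⟩ : ∃ R : ℝ, 0 ≤ R ∧ star x ⬝ᵥ T *ᵥ x
        = (R : ℂ) * (star (u : Fin n → ℂ) ⬝ᵥ T *ᵥ (u : Fin n → ℂ)) := by
      refine ⟨‖x'‖^2, by positivity, ?_⟩
      have huf : (u : Fin n → ℂ) = ((‖x'‖⁻¹ : ℝ) : ℂ) • x := by
        funext i
        show (‖x'‖⁻¹ : ℝ) • (x i) = _
        rw [Complex.real_smul]
        rfl
      rw [huf, star_smul, Matrix.mulVec_smul, smul_dotProduct, dotProduct_smul]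
      simp only [smul_eq_mul, star_trivial, RCLike.star_def, Complex.conj_ofReal]
      rw [show ((‖x'‖^2 : ℝ) : ℂ) = (‖x'‖ : ℂ)^2 by push_cast; ring]
      have hnC : (‖x'‖ : ℂ) ≠ 0 := by exact_mod_cast hnorm.ne'
      push_cast
      field_simp
    obtain ⟨h1, h2⟩ := hmem
    set z := star (u : Fin n → ℂ) ⬝ᵥ T *ᵥ (u : Fin n → ℂ)
    have hre : (star x ⬝ᵥ T *ᵥ x).re = R * z.re := by rw [hRx]; simp [Complex.mul_re]
    have him : (star x ⬝ᵥ T *ᵥ x).im = R * z.im := by rw [hRx]; simp [Complex.mul_im]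
    rw [hre, him]
    constructor
    · exact mul_nonneg hR h1.le
    · rw [abs_mul, _root_.abs_of_nonneg hR]
      calc R * |z.im| ≤ R * (Real.tan α * z.re) := mul_le_mul_of_nonneg_left h2 hR
        _ = Real.tan α * (R * z.re) := by ring

lemma matrix_eq_zero_of_quad {S : Matrix (Fin n) (Fin n) ℂ}
    (h0 : ∀ x, star x ⬝ᵥ S *ᵥ x = 0) : S = 0 := by
  have hxy : ∀ x y : Fin n → ℂ, star x ⬝ᵥ S *ᵥ y = 0 := by
    intro x y
    have e1 := h0 (x + y)
    have e2 := h0 (x + Complex.I • y)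
    have ex := h0 x
    have ey := h0 y
    simp only [star_add, star_smul, Matrix.mulVec_add, Matrix.mulVec_smul,
      add_dotProduct, dotProduct_add, smul_dotProduct,
      dotProduct_smul, smul_eq_mul, RCLike.star_def, Complex.conj_I] at e1 e2
    have hplus : star x ⬝ᵥ S *ᵥ y + star y ⬝ᵥ S *ᵥ x = 0 := by
      linear_combination e1 - ex - ey
    have hminusI : Complex.I * (star x ⬝ᵥ S *ᵥ y - star y ⬝ᵥ S *ᵥ x) = 0 := by
      linear_combination e2 - ex + (Complex.I * Complex.I) * ey
    have hminus : star x ⬝ᵥ S *ᵥ y - star y ⬝ᵥ S *ᵥ x = 0 :=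
      (mul_eq_zero.mp hminusI).resolve_left Complex.I_ne_zero
    linear_combination (hplus + hminus) / 2
  ext i j
  have key := hxy (Pi.single (M := fun _ : Fin n => ℂ) i 1)
    (Pi.single (M := fun _ : Fin n => ℂ) j 1)
  have hstar : star (Pi.single (M := fun _ : Fin n => ℂ) i 1)
      = Pi.single (M := fun _ : Fin n => ℂ) i 1 := by
    funext k
    by_cases h : k = i <;> simp [Pi.single_apply, h]
  rw [hstar, Matrix.mulVec_single] at key
  simpa [single_dotProduct] using key

lemma posSemidef_add {m : Type*} [Fintype m] {A B : Matrix m m ℂ}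
    (hA : A.PosSemidef) (hB : B.PosSemidef) :
    (A + B).PosSemidef := by
  refine Matrix.PosSemidef.of_dotProduct_mulVec_nonneg (hA.1.add hB.1) fun x => ?_
  rw [Matrix.add_mulVec, dotProduct_add]
  exact add_nonneg (hA.dotProduct_mulVec_nonneg x) (hB.dotProduct_mulVec_nonneg x)

end SectorAux

open SectorAux

theorem fromBlocks_posSemidef_of_sector {n : ℕ} (T : Matrix (Fin n) (Fin n) ℂ) (α : ℝ)
    (hα : α ∈ Set.Ico 0 (Real.pi / 2)) (h : numRange T ⊆ sector α) :
    (Matrix.fromBlocks ((((Real.cos α)⁻¹ : ℝ) : ℂ) • reM T) T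
      Tᴴ ((((Real.cos α)⁻¹ : ℝ) : ℂ) • reM T)).PosSemidef := by
  obtain ⟨hα0, hα2⟩ := hα
  rcases eq_or_lt_of_le hα0 with h0 | h0
  · -- α = 0
    subst h0
    have him0 : ∀ x : Fin n → ℂ, star x ⬝ᵥ (imM T) *ᵥ x = 0 := by
      intro x
      rw [aux_imM]
      obtain ⟨h1, h2⟩ := sector_quad h x
      rw [Real.tan_zero, zero_mul] at h2
      have : (star x ⬝ᵥ T *ᵥ x).im = 0 := abs_eq_zero.mp (le_antisymm h2 (abs_nonneg _))
      simp [this]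
    have hS : imM T = 0 := matrix_eq_zero_of_quad him0
    have hTR : T = reM T := by
      have := reM_add_I_imM T
      rw [hS, smul_zero, add_zero] at this
      exact this.symm
    have hR : (reM T).PosSemidef := by
      refine Matrix.PosSemidef.of_dotProduct_mulVec_nonneg (reM_herm T) fun x => ?_
      rw [aux_reM]
      exact_mod_cast (sector_quad h x).1
    have hblock := blockPSD hR 1 1 zero_le_one (by simp)
    have hcast : (((Real.cos 0)⁻¹ : ℝ) : ℂ) = ((1 : ℝ) : ℂ) := by norm_num
    rw [hcast]
    have h1 : (1:ℂ) • reM T = T := by rw [one_smul, ← hTR]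
    have h2 : (starRingEnd ℂ (1:ℂ)) • reM T = Tᴴ := by
      rw [_root_.map_one, one_smul]
      calc reM T = (reM T)ᴴ := (reM_herm T).eq.symm
        _ = Tᴴ := by rw [← hTR]
    rwa [h1, h2] at hblock
  · -- 0 < α
    set s := Real.sin α with hs_def
    set c := Real.cos α with hc_def
    have hs : 0 < s := Real.sin_pos_of_pos_of_lt_pi h0 (lt_trans hα2 (by linarith [Real.pi_pos]))
    have hc : 0 < c := Real.cos_pos_of_mem_Ioo ⟨by linarith [Real.pi_pos], hα2⟩
    have htan : Real.tan α = s / c := Real.tan_eq_sin_div_cos α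
    set Q : Matrix (Fin n) (Fin n) ℂ := ((s:ℝ):ℂ) • reM T + ((c:ℝ):ℂ) • imM T with hQ_def
    set P : Matrix (Fin n) (Fin n) ℂ := ((s:ℝ):ℂ) • reM T - ((c:ℝ):ℂ) • imM T with hP_def
    have hquad : ∀ x : Fin n → ℂ, 0 ≤ (star x ⬝ᵥ T *ᵥ x).re ∧
        |(star x ⬝ᵥ T *ᵥ x).im| ≤ (s/c) * (star x ⬝ᵥ T *ᵥ x).re := by
      intro x
      obtain ⟨h1, h2⟩ := sector_quad h x
      exact ⟨h1, by rwa [htan] at h2⟩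
    have hQpsd : Q.PosSemidef := by
      refine Matrix.PosSemidef.of_dotProduct_mulVec_nonneg ?_ ?_
      · rw [hQ_def]
        unfold Matrix.IsHermitian
        rw [Matrix.conjTranspose_add, Matrix.conjTranspose_smul, Matrix.conjTranspose_smul,
          (reM_herm T).eq, (imM_herm T).eq]
        simp [RCLike.star_def, Complex.conj_ofReal]
      · intro x
        rw [hQ_def, Matrix.add_mulVec, dotProduct_add, Matrix.smul_mulVec,
          Matrix.smul_mulVec, dotProduct_smul, dotProduct_smul,
          smul_eq_mul, smul_eq_mul, aux_reM, aux_imM]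
        obtain ⟨h1, h2⟩ := hquad x
        set z := star x ⬝ᵥ T *ᵥ x
        rw [show ((s:ℝ):ℂ) * ((z.re:ℝ):ℂ) + ((c:ℝ):ℂ) * ((z.im:ℝ):ℂ)
            = ((s * z.re + c * z.im : ℝ) : ℂ) by push_cast; ring]
        rw [show (0:ℂ) = ((0:ℝ):ℂ) from rfl, Complex.real_le_real]
        have h3 := mul_le_mul_of_nonneg_left (abs_le.mp h2).1 hc.le
        have he : c * -(s / c * z.re) = -(s * z.re) := by field_simp; try ring
        linarith [h3, he.le, he.ge]
    have hPpsd : P.PosSemidef := by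
      refine Matrix.PosSemidef.of_dotProduct_mulVec_nonneg ?_ ?_
      · rw [hP_def]
        unfold Matrix.IsHermitian
        rw [Matrix.conjTranspose_sub, Matrix.conjTranspose_smul, Matrix.conjTranspose_smul,
          (reM_herm T).eq, (imM_herm T).eq]
        simp [RCLike.star_def, Complex.conj_ofReal]
      · intro x
        rw [hP_def, Matrix.sub_mulVec, dotProduct_sub, Matrix.smul_mulVec,
          Matrix.smul_mulVec, dotProduct_smul, dotProduct_smul,
          smul_eq_mul, smul_eq_mul, aux_reM, aux_imM]
        obtain ⟨h1, h2⟩ := hquad x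
        set z := star x ⬝ᵥ T *ᵥ x
        rw [show ((s:ℝ):ℂ) * ((z.re:ℝ):ℂ) - ((c:ℝ):ℂ) * ((z.im:ℝ):ℂ)
            = ((s * z.re - c * z.im : ℝ) : ℂ) by push_cast; ring]
        rw [show (0:ℂ) = ((0:ℝ):ℂ) from rfl, Complex.real_le_real]
        have h3 := mul_le_mul_of_nonneg_left (abs_le.mp h2).2 hc.le
        have he : c * (s / c * z.re) = s * z.re := by field_simp; try ring
        linarith [h3, he.le, he.ge]
    -- the scalar a and radius r
    set a : ℂ := ((1/(2*s) : ℝ) : ℂ) + ((1/(2*c) : ℝ) : ℂ) * Complex.I with ha_def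
    set r : ℝ := 1/(2*s*c) with hr_def
    have hr0 : 0 ≤ r := by positivity
    have ha_conj : starRingEnd ℂ a = ((1/(2*s) : ℝ) : ℂ) - ((1/(2*c) : ℝ) : ℂ) * Complex.I := by
      rw [ha_def, map_add, _root_.map_mul, Complex.conj_ofReal, Complex.conj_ofReal, Complex.conj_I]
      ring
    have hre_a : a.re = 1/(2*s) := by rw [ha_def]; simp
    have him_a : a.im = 1/(2*c) := by rw [ha_def]; simp
    have hra : a * starRingEnd ℂ a = (r : ℂ) * (r : ℂ) := by
      rw [Complex.mul_conj, show ((r:ℂ) * (r:ℂ)) = ((r*r : ℝ):ℂ) by push_cast; ring]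
      norm_cast
      rw [Complex.normSq_apply, hre_a, him_a, hr_def]
      have hsq := Real.sin_sq_add_cos_sq α
      field_simp
      linear_combination hsq
    have hsC : ((s:ℝ):ℂ) ≠ 0 := by exact_mod_cast hs.ne'
    have hcC : ((c:ℝ):ℂ) ≠ 0 := by exact_mod_cast hc.ne'
    have ha1 : (a + starRingEnd ℂ a) * ((s:ℝ):ℂ) = 1 := by
      rw [ha_conj, ha_def]
      push_cast
      field_simp
      ring
    have ha2 : (a - starRingEnd ℂ a) * ((c:ℝ):ℂ) = Complex.I := by
      rw [ha_conj, ha_def]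
      push_cast
      field_simp
      ring
    have hd : (2:ℂ) * ((r:ℝ):ℂ) * ((s:ℝ):ℂ) = (((c⁻¹ : ℝ)):ℂ) := by
      rw [hr_def]
      push_cast
      field_simp
    have hb11 : (((c⁻¹:ℝ)):ℂ) • reM T = (r:ℂ) • Q + (r:ℂ) • P := by
      rw [hQ_def, hP_def, ← hd]
      module
    have hb12 : T = a • Q + (starRingEnd ℂ a) • P := by
      have step : a • Q + (starRingEnd ℂ a) • P
          = ((a + starRingEnd ℂ a) * ((s:ℝ):ℂ)) • reM T
            + ((a - starRingEnd ℂ a) * ((c:ℝ):ℂ)) • imM T := by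
        rw [hQ_def, hP_def]
        module
      rw [step, ha1, ha2, one_smul]
      exact (reM_add_I_imM T).symm
    have hb21 : Tᴴ = (starRingEnd ℂ a) • Q + a • P := by
      have step : (starRingEnd ℂ a) • Q + a • P
          = ((a + starRingEnd ℂ a) * ((s:ℝ):ℂ)) • reM T
            + ((starRingEnd ℂ a - a) * ((c:ℝ):ℂ)) • imM T := by
        rw [hQ_def, hP_def]
        module
      rw [step, ha1, one_smul,
        show (starRingEnd ℂ a - a) * ((c:ℝ):ℂ) = -Complex.I by linear_combination -ha2]
      rw [← reM_sub_I_imM T, neg_smul, sub_eq_add_neg]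
    have hsum : Matrix.fromBlocks ((((c⁻¹:ℝ)):ℂ) • reM T) T Tᴴ ((((c⁻¹:ℝ)):ℂ) • reM T)
        = Matrix.fromBlocks ((r:ℂ) • Q) (a • Q) ((starRingEnd ℂ a) • Q) ((r:ℂ) • Q)
          + Matrix.fromBlocks ((r:ℂ) • P) ((starRingEnd ℂ a) • P) (a • P) ((r:ℂ) • P) := by
      rw [hb11, hb21, hb12, Matrix.fromBlocks_add]
    rw [hsum]
    have hra' : (starRingEnd ℂ a) * starRingEnd ℂ (starRingEnd ℂ a) = (r:ℂ) * (r:ℂ) := by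
      rw [Complex.conj_conj]
      linear_combination hra
    have hfin := blockPSD hPpsd (starRingEnd ℂ a) r hr0 hra'
    rw [Complex.conj_conj] at hfin
    exact posSemidef_add (blockPSD hQpsd a r hr0 hra) hfin
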